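/- Let r* > 0, let g : (0, r*] → ℝ be nonnegative, nonincreasing, and integrable on (0, r*], and let s > 0 satisfy r* s ≥ π/2. Then ∫₀^{r*} g(r) cos(s r) dr ≤ ∫₀^{(π/2)/s} g(r) dr. -/

import Mathlib

open Real MeasureTheory

private lemma my_integral_nonpos {f : ℝ → ℝ} {a b : ℝ} (hab : a ≤ b)
    (hf : ∀ u, u ∈ Set.Icc a b → f u ≤ 0) : (∫ u in a..b, f u) ≤ 0 := by
  have h := intervalIntegral.integral_nonneg (μ := volume) (f := fun u => -f u) hab
    (fun u hu => neg_nonneg.mpr (hf u hu))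
  rw [intervalIntegral.integral_neg] at h
  linarith

private lemma my_cont (s : ℝ) : Continuous fun r : ℝ => Real.cos (s * r) :=
  Real.continuous_cos.comp (continuous_const.mul continuous_id)

private lemma aux_pair (rs : ℝ) (g : ℝ → ℝ)
    (hnonneg : ∀ r ∈ Set.Ioc (0:ℝ) rs, 0 ≤ g r)
    (hanti : AntitoneOn g (Set.Ioc (0:ℝ) rs))
    (hint : IntervalIntegrable g volume 0 rs)
    (s : ℝ) (hs : 0 < s) (k : ℕ) (b : ℝ)
    (hab : (π/2 + 2*π*k)/s ≤ b) (hb2 : b ≤ (π/2 + 2*π*k)/s + 2*π/s) (hbrs : b ≤ rs) :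
    (∫ r in ((π/2 + 2*π*k)/s)..b, g r * Real.cos (s * r)) ≤ 0 := by
  have hπ := Real.pi_pos
  obtain ⟨a, ha_def⟩ : ∃ a : ℝ, a = (π/2 + 2*π*(k:ℝ))/s := ⟨_, rfl⟩
  rw [← ha_def] at hab hb2 ⊢
  have ha0 : 0 < a := by rw [ha_def]; positivity
  have hsa : s * a = π/2 + 2*π*k := by
    rw [ha_def, mul_div_cancel₀ _ (ne_of_gt hs)]
  -- cosine is nonpositive on [a, a + π/s]
  have hcos : ∀ r, a ≤ r → r ≤ a + π/s → Real.cos (s*r) ≤ 0 := by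
    intro r h1 h2
    have heq : Real.cos (s*r) = Real.cos (s*r - (k:ℤ)*(2*π)) :=
      (Real.cos_sub_int_mul_two_pi _ _).symm
    rw [heq]
    have hl : s * a ≤ s * r := mul_le_mul_of_nonneg_left h1 hs.le
    have hsap : s * (a + π/s) = s * a + π := by field_simp
    have hu : s * r ≤ s * a + π := by
      nlinarith [mul_le_mul_of_nonneg_left h2 hs.le]
    apply Real.cos_nonpos_of_pi_div_two_le_of_le
    · push_cast; linarith
    · push_cast; linarith
  have hgpos : ∀ r, a ≤ r → r ≤ rs → 0 ≤ g r := fun r h1 h2 =>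
    hnonneg r ⟨lt_of_lt_of_le ha0 h1, h2⟩
  have hgc : IntervalIntegrable (fun r => g r * Real.cos (s*r)) volume 0 rs :=
    hint.mul_continuousOn (my_cont s).continuousOn
  have hrs0 : (0:ℝ) ≤ rs := le_trans (le_trans ha0.le hab) hbrs
  have subs : ∀ u v : ℝ, 0 ≤ u → u ≤ v → v ≤ rs →
      IntervalIntegrable (fun r => g r * Real.cos (s*r)) volume u v := by
    intro u v hu huv hv
    apply hgc.mono_set
    rw [Set.uIcc_of_le huv, Set.uIcc_of_le hrs0]
    exact Set.Icc_subset_Icc hu hv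
  by_cases hb1 : b ≤ a + π/s
  · exact my_integral_nonpos hab (fun u hu =>
      mul_nonpos_of_nonneg_of_nonpos (hgpos u hu.1 (le_trans hu.2 hbrs))
        (hcos u hu.1 (le_trans hu.2 hb1)))
  · push_neg at hb1
    have hps : 0 < π/s := by positivity
    have habs : a ≤ a + π/s := by linarith
    have haps : a + π/s ≤ b := hb1.le
    have hbms : a ≤ b - π/s := by linarith
    have hbms2 : b - π/s ≤ a + π/s := by
      have h2 : 2*π/s = π/s + π/s := by ring
      linarith
    have hsub : (∫ r in (a+π/s)..b, g r * Real.cos (s*r))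
        = ∫ x in a..(b-π/s), g (x+π/s) * Real.cos (s*(x+π/s)) := by
      have h := intervalIntegral.integral_comp_add_right (a := a) (b := b - π/s)
        (fun r => g r * Real.cos (s*r)) (π/s)
      rw [sub_add_cancel] at h
      exact h.symm
    have hI1 : IntervalIntegrable (fun r => g r * Real.cos (s*r)) volume a (a+π/s) :=
      subs a (a+π/s) ha0.le habs (le_trans haps hbrs)
    have hI2 : IntervalIntegrable (fun r => g r * Real.cos (s*r)) volume a (b-π/s) :=
      subs a (b-π/s) ha0.le hbms (by linarith)
    have hI3 : IntervalIntegrable (fun r => g r * Real.cos (s*r)) volume (a+π/s) b :=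
      subs (a+π/s) b (by positivity) haps hbrs
    have hI4 : IntervalIntegrable (fun x => g (x+π/s) * Real.cos (s*(x+π/s)))
        volume a (b-π/s) := by
      have h := hI3.comp_add_right (π/s)
      simpa using h
    have key : (∫ r in (a+π/s)..b, g r * Real.cos (s*r))
        ≤ - ∫ r in a..(b-π/s), g r * Real.cos (s*r) := by
      rw [hsub, ← intervalIntegral.integral_neg]
      apply intervalIntegral.integral_mono_on hbms hI4 hI2.neg
      intro x hx
      simp only [Pi.neg_apply]
      have hx1 : a ≤ x := hx.1
      have hx2 : x ≤ b - π/s := hx.2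
      have hcosx : Real.cos (s*x) ≤ 0 := hcos x hx1 (by linarith)
      have hmem1 : x ∈ Set.Ioc (0:ℝ) rs := ⟨lt_of_lt_of_le ha0 hx1, by linarith⟩
      have hmem2 : x + π/s ∈ Set.Ioc (0:ℝ) rs := ⟨by linarith [hmem1.1], by linarith⟩
      have h1 : g (x + π/s) ≤ g x := hanti hmem1 hmem2 (by linarith)
      have hceq : s*(x+π/s) = s*x + π := by field_simp
      rw [hceq, Real.cos_add_pi]
      have hmul := mul_le_mul_of_nonneg_right h1 (neg_nonneg.mpr hcosx)
      nlinarith [hmul]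
    have hsplit : (∫ r in a..b, g r * Real.cos (s*r))
        = (∫ r in a..(a+π/s), g r * Real.cos (s*r)) + ∫ r in (a+π/s)..b, g r * Real.cos (s*r) :=
      (intervalIntegral.integral_add_adjacent_intervals hI1 hI3).symm
    have hdiff : (∫ r in a..(a+π/s), g r * Real.cos (s*r))
        - (∫ r in a..(b-π/s), g r * Real.cos (s*r))
        = ∫ r in (b-π/s)..(a+π/s), g r * Real.cos (s*r) :=
      intervalIntegral.integral_interval_sub_left hI1 hI2
    have hlast : (∫ r in (b-π/s)..(a+π/s), g r * Real.cos (s*r)) ≤ 0 := by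
      apply my_integral_nonpos hbms2
      intro u hu
      exact mul_nonpos_of_nonneg_of_nonpos
        (hgpos u (le_trans hbms hu.1) (by linarith [hu.2]))
        (hcos u (le_trans hbms hu.1) hu.2)
    rw [hsplit]
    linarith

private lemma aux_tail (rs : ℝ) (g : ℝ → ℝ)
    (hnonneg : ∀ r ∈ Set.Ioc (0:ℝ) rs, 0 ≤ g r)
    (hanti : AntitoneOn g (Set.Ioc (0:ℝ) rs))
    (hint : IntervalIntegrable g volume 0 rs)
    (s : ℝ) (hs : 0 < s) :
    ∀ n k : ℕ, ∀ b : ℝ,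
      (π/2 + 2*π*k)/s ≤ b → b ≤ (π/2 + 2*π*k)/s + 2*π*n/s → b ≤ rs →
      (∫ r in ((π/2 + 2*π*k)/s)..b, g r * Real.cos (s * r)) ≤ 0 := by
  intro n
  induction n with
  | zero =>
    intro k b hab hup _
    have hb : b = (π/2 + 2*π*(k:ℝ))/s := le_antisymm (by push_cast at hup; simpa using hup) hab
    simp [hb]
  | succ n ih =>
    intro k b hab hup hbrs
    have hπ := Real.pi_pos
    by_cases hb : b ≤ (π/2 + 2*π*k)/s + 2*π/s
    · exact aux_pair rs g hnonneg hanti hint s hs k b hab hb hbrs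
    · push_neg at hb
      have hc_eq : (π/2 + 2*π*((k:ℝ)+1))/s = (π/2 + 2*π*(k:ℝ))/s + 2*π/s := by
        rw [← add_div]; ring_nf
      obtain ⟨a, ha_def⟩ : ∃ a : ℝ, a = (π/2 + 2*π*(k:ℝ))/s := ⟨_, rfl⟩
      obtain ⟨c, hc_def⟩ : ∃ c : ℝ, c = a + 2*π/s := ⟨_, rfl⟩
      rw [← ha_def] at hab hup hb hc_eq ⊢
      rw [← hc_def] at hc_eq
      have ha0 : 0 < a := by rw [ha_def]; positivity
      have hac : a ≤ c := by
        have h2 : (0:ℝ) < 2*π/s := by positivity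
        rw [hc_def]; linarith
      have hcb : c ≤ b := le_of_lt (by rw [hc_def]; exact hb)
      have hcrs : c ≤ rs := le_trans hcb hbrs
      have hgc : IntervalIntegrable (fun r => g r * Real.cos (s*r)) volume 0 rs :=
        hint.mul_continuousOn (my_cont s).continuousOn
      have hrs0 : (0:ℝ) ≤ rs := le_trans ha0.le (le_trans hac hcrs)
      have subs : ∀ u v : ℝ, 0 ≤ u → u ≤ v → v ≤ rs →
          IntervalIntegrable (fun r => g r * Real.cos (s*r)) volume u v := by
        intro u v hu huv hv
        apply hgc.mono_set
        rw [Set.uIcc_of_le huv, Set.uIcc_of_le hrs0]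
        exact Set.Icc_subset_Icc hu hv
      have hI1 : IntervalIntegrable (fun r => g r * Real.cos (s*r)) volume a c :=
        subs a c ha0.le hac hcrs
      have hI2 : IntervalIntegrable (fun r => g r * Real.cos (s*r)) volume c b :=
        subs c b (le_trans ha0.le hac) hcb hbrs
      have hsplit : (∫ r in a..b, g r * Real.cos (s*r))
          = (∫ r in a..c, g r * Real.cos (s*r)) + ∫ r in c..b, g r * Real.cos (s*r) :=
        (intervalIntegral.integral_add_adjacent_intervals hI1 hI2).symm
      have h1 : (∫ r in a..c, g r * Real.cos (s*r)) ≤ 0 := by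
        have := aux_pair rs g hnonneg hanti hint s hs k c
          (by rw [← ha_def]; exact hac) (by rw [← ha_def, ← hc_def]) hcrs
        rw [← ha_def] at this
        exact this
      have h2 : (∫ r in c..b, g r * Real.cos (s*r)) ≤ 0 := by
        have hck : c = (π/2 + 2*π*((k:ℕ)+1:ℕ))/s := by push_cast; rw [hc_eq]
        have hup' : b ≤ c + 2*π*(n:ℝ)/s := by
          have harith : 2*π*((n:ℝ)+1)/s = 2*π/s + 2*π*(n:ℝ)/s := by
            rw [← add_div]; congr 1; ring
          push_cast at hup
          rw [hc_def]
          linarith [hup, harith.le]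
        have := ih (k+1) b (by rw [← hck]; exact hcb) (by rw [← hck]; push_cast; exact hup') hbrs
        rw [← hck] at this
        exact this
      rw [hsplit]
      linarith

theorem integral_mul_cos_le_of_antitoneOn_Ioc (rs : ℝ) (hrs : 0 < rs) (g : ℝ → ℝ)
    (hnonneg : ∀ r ∈ Set.Ioc (0:ℝ) rs, 0 ≤ g r)
    (hanti : AntitoneOn g (Set.Ioc (0:ℝ) rs))
    (hint : IntervalIntegrable g volume 0 rs)
    (s : ℝ) (hs : 0 < s) (hrss : π / 2 ≤ rs * s) :
    (∫ r in (0:ℝ)..rs, g r * Real.cos (s * r)) ≤ ∫ r in (0:ℝ)..(π / 2 / s), g r := by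
  have hπ := Real.pi_pos
  have ha0 : 0 < π / 2 / s := by positivity
  have hars : π / 2 / s ≤ rs := by
    rw [div_le_iff₀ hs]; linarith
  have hgc : IntervalIntegrable (fun r => g r * Real.cos (s*r)) volume 0 rs :=
    hint.mul_continuousOn (my_cont s).continuousOn
  have hI1 : IntervalIntegrable (fun r => g r * Real.cos (s*r)) volume 0 (π / 2 / s) := by
    apply hgc.mono_set
    rw [Set.uIcc_of_le ha0.le, Set.uIcc_of_le hrs.le]
    exact Set.Icc_subset_Icc le_rfl hars
  have hI2 : IntervalIntegrable (fun r => g r * Real.cos (s*r)) volume (π / 2 / s) rs := by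
    apply hgc.mono_set
    rw [Set.uIcc_of_le hars, Set.uIcc_of_le hrs.le]
    exact Set.Icc_subset_Icc ha0.le le_rfl
  have hIg : IntervalIntegrable g volume 0 (π / 2 / s) := by
    apply hint.mono_set
    rw [Set.uIcc_of_le ha0.le, Set.uIcc_of_le hrs.le]
    exact Set.Icc_subset_Icc le_rfl hars
  have hsplit : (∫ r in (0:ℝ)..rs, g r * Real.cos (s*r))
      = (∫ r in (0:ℝ)..(π / 2 / s), g r * Real.cos (s*r))
        + ∫ r in (π / 2 / s)..rs, g r * Real.cos (s*r) :=
    (intervalIntegral.integral_add_adjacent_intervals hI1 hI2).symm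
  have htail : (∫ r in (π / 2 / s)..rs, g r * Real.cos (s*r)) ≤ 0 := by
    obtain ⟨n, hn⟩ := exists_nat_ge ((rs - π / 2 / s) * s / (2*π))
    have haeq : (π/2 + 2*π*((0:ℕ):ℝ))/s = π / 2 / s := by push_cast; ring_nf
    have hup : rs ≤ (π/2 + 2*π*((0:ℕ):ℝ))/s + 2*π*(n:ℝ)/s := by
      rw [haeq]
      rw [div_le_iff₀ (by positivity : (0:ℝ) < 2*π)] at hn
      have h2 : rs - π / 2 / s ≤ 2*π*(n:ℝ)/s := by
        rw [le_div_iff₀ hs]; nlinarith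
      linarith
    have := aux_tail rs g hnonneg hanti hint s hs n 0 rs
      (by rw [haeq]; exact hars) (by push_cast at hup ⊢; exact hup) le_rfl
    rw [haeq] at this
    exact this
  have hhead : (∫ r in (0:ℝ)..(π / 2 / s), g r * Real.cos (s*r))
      ≤ ∫ r in (0:ℝ)..(π / 2 / s), g r := by
    apply intervalIntegral.integral_mono_on ha0.le hI1 hIg
    intro x hx
    rcases eq_or_lt_of_le hx.1 with h0 | h0
    · rw [← h0]; simp
    · have hgx : 0 ≤ g x := hnonneg x ⟨h0, le_trans hx.2 hars⟩
      nlinarith [Real.cos_le_one (s*x), hgx]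
  rw [hsplit]
  linarith
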